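/- Jet evaluation ⊙ satisfies the bound ‖σ⊙ξ‖ ≤ ‖ξ‖ + (k+1)‖σ‖ + ‖ξ‖·‖σ‖, where σ = (x, y, p) is a k-jet from E to F, ξ = (x, X) ∈ E × E a tangent vector at x, and σ⊙ξ is the (k−1)-jet of the tangent map determined by σ at ξ. -/

import Mathlib

set_option maxHeartbeats 1000000


/-- Jet evaluation satisfies `‖σ⊙ξ‖ ≤ ‖ξ‖ + (k+1)‖σ‖ + ‖ξ‖·‖σ‖`.
Here `σ = (x, y, p)` is a `k`-jet from `E` to `F`, `ξ = (x, X)` a tangent vector, and the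
`(k−1)`-jet `σ⊙ξ` has base `(x, X)`, value `(y, p₁(X))`, and `j`-th component (for
`1 ≤ j ≤ k−1`) with horizontal part `p_j(π_H,…,π_H)` and vertical part
`p_{j+1}(π_H,…,π_H,X) + j·p_j(π_H,…,π_H,π_V)`; jet norms are sums of component norms. -/
theorem stmt_8 {E F : Type*} [NormedAddCommGroup E] [NormedSpace ℝ E]
    [NormedAddCommGroup F] [NormedSpace ℝ F]
    (k : ℕ) (hk : 1 ≤ k) (x X : E) (y : F)
    (p : FormalMultilinearSeries ℝ E F)
    (hp0 : p 0 = 0) (hpk : ∀ n, k < n → p n = 0)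
    (ηH ηV : FormalMultilinearSeries ℝ (E × E) F)
    (hH : ∀ j, 1 ≤ j → j ≤ k - 1 → ∀ v : Fin j → E × E,
      ηH j v = p j (fun i => (v i).1))
    (hV : ∀ j, 1 ≤ j → j ≤ k - 1 → ∀ v : Fin j → E × E,
      ηV j v = p (j + 1) (Fin.snoc (fun i => (v i).1) X)
        + (j : ℝ) • p j (fun i => if (i : ℕ) = j - 1 then (v i).2 else (v i).1)) :
    ‖x‖ + ‖X‖ + (‖y‖ + ‖p 1 (fun _ => X)‖)
        + ∑ j ∈ Finset.Icc 1 (k - 1), (‖ηH j‖ + ‖ηV j‖) ≤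
      (‖x‖ + ‖X‖) + ((k : ℝ) + 1) * (‖x‖ + ‖y‖ + ∑ j ∈ Finset.Icc 1 k, ‖p j‖)
        + (‖x‖ + ‖X‖) * (‖x‖ + ‖y‖ + ∑ j ∈ Finset.Icc 1 k, ‖p j‖) := by
  set T : ℝ := ∑ j ∈ Finset.Icc 1 k, ‖p j‖ with hT
  have hTnn : 0 ≤ T := Finset.sum_nonneg fun _ _ => norm_nonneg _
  -- bound on p 1 X
  have hp1 : ‖p 1 (fun _ => X)‖ ≤ ‖p 1‖ * ‖X‖ := by
    have := (p 1).le_opNorm (fun _ => X)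
    simpa using this
  -- per-component bounds
  have hHb : ∀ j ∈ Finset.Icc 1 (k - 1), ‖ηH j‖ ≤ ‖p j‖ := by
    intro j hj
    rw [Finset.mem_Icc] at hj
    refine (ηH j).opNorm_le_bound (norm_nonneg _) fun m => ?_
    rw [hH j hj.1 hj.2 m]
    calc ‖p j (fun i => (m i).1)‖ ≤ ‖p j‖ * ∏ i, ‖(m i).1‖ := (p j).le_opNorm _
      _ ≤ ‖p j‖ * ∏ i, ‖m i‖ :=
          mul_le_mul_of_nonneg_left
            (Finset.prod_le_prod (fun i _ => norm_nonneg _)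
              (fun i _ => norm_fst_le (m i))) (norm_nonneg _)
  have hVb : ∀ j ∈ Finset.Icc 1 (k - 1),
      ‖ηV j‖ ≤ ‖X‖ * ‖p (j + 1)‖ + (j : ℝ) * ‖p j‖ := by
    intro j hj
    rw [Finset.mem_Icc] at hj
    have hjnn : (0 : ℝ) ≤ (j : ℝ) := Nat.cast_nonneg _
    refine (ηV j).opNorm_le_bound (by positivity) fun m => ?_
    rw [hV j hj.1 hj.2 m]
    set w : Fin (j + 1) → E := Fin.snoc (fun i => (m i).1) X with hw
    have hprod : ∏ i, ‖w i‖ = (∏ i, ‖(m i).1‖) * ‖X‖ := by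
      rw [← Fin.prod_snoc ‖X‖ (fun i => ‖(m i).1‖)]
      refine Finset.prod_congr rfl fun i _ => ?_
      induction i using Fin.lastCases with
      | last => simp [hw]
      | cast i => simp [hw]
    have h1 : ‖p (j + 1) w‖ ≤ ‖X‖ * ‖p (j + 1)‖ * ∏ i, ‖m i‖ := by
      have ha := (p (j + 1)).le_opNorm w
      have hb : (∏ i, ‖(m i).1‖) * ‖X‖ ≤ (∏ i, ‖m i‖) * ‖X‖ :=
        mul_le_mul_of_nonneg_right
          (Finset.prod_le_prod (fun i _ => norm_nonneg _)
            (fun i _ => norm_fst_le (m i))) (norm_nonneg _)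
      have hc : ‖p (j + 1)‖ * ((∏ i, ‖(m i).1‖) * ‖X‖)
          ≤ ‖p (j + 1)‖ * ((∏ i, ‖m i‖) * ‖X‖) :=
        mul_le_mul_of_nonneg_left hb (norm_nonneg _)
      rw [hprod] at ha
      calc ‖p (j + 1) w‖ ≤ ‖p (j + 1)‖ * ((∏ i, ‖(m i).1‖) * ‖X‖) := ha
        _ ≤ ‖p (j + 1)‖ * ((∏ i, ‖m i‖) * ‖X‖) := hc
        _ = ‖X‖ * ‖p (j + 1)‖ * ∏ i, ‖m i‖ := by ring
    have h2 : ‖(j : ℝ) • p j (fun i : Fin j =>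
          if (i : ℕ) = j - 1 then (m i).2 else (m i).1)‖
        ≤ (j : ℝ) * ‖p j‖ * ∏ i, ‖m i‖ := by
      rw [norm_smul, Real.norm_natCast, mul_assoc]
      refine mul_le_mul_of_nonneg_left ?_ hjnn
      have ha := (p j).le_opNorm
        (fun i : Fin j => if (i : ℕ) = j - 1 then (m i).2 else (m i).1)
      refine ha.trans (mul_le_mul_of_nonneg_left
        (Finset.prod_le_prod (fun i _ => norm_nonneg _)
          (fun i _ => ?_)) (norm_nonneg _))
      split
      · exact norm_snd_le (m i)
      · exact norm_fst_le (m i)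
    calc ‖p (j + 1) w + (j : ℝ) • p j (fun i : Fin j =>
            if (i : ℕ) = j - 1 then (m i).2 else (m i).1)‖
        ≤ ‖p (j + 1) w‖ + ‖(j : ℝ) • p j (fun i : Fin j =>
            if (i : ℕ) = j - 1 then (m i).2 else (m i).1)‖ := norm_add_le _ _
      _ ≤ ‖X‖ * ‖p (j + 1)‖ * ∏ i, ‖m i‖ + (j : ℝ) * ‖p j‖ * ∏ i, ‖m i‖ :=
          add_le_add h1 h2
      _ = (‖X‖ * ‖p (j + 1)‖ + (j : ℝ) * ‖p j‖) * ∏ i, ‖m i‖ := by ring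
  -- sum estimate
  have hsum : ∑ j ∈ Finset.Icc 1 (k - 1), (‖ηH j‖ + ‖ηV j‖)
      ≤ ∑ j ∈ Finset.Icc 1 (k - 1),
        (((j : ℝ) + 1) * ‖p j‖ + ‖X‖ * ‖p (j + 1)‖) := by
    refine Finset.sum_le_sum fun j hj => ?_
    have := add_le_add (hHb j hj) (hVb j hj)
    linarith [this]
  have hsum1 : ∑ j ∈ Finset.Icc 1 (k - 1), ((j : ℝ) + 1) * ‖p j‖
      ≤ (k : ℝ) * T := by
    calc ∑ j ∈ Finset.Icc 1 (k - 1), ((j : ℝ) + 1) * ‖p j‖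
        ≤ ∑ j ∈ Finset.Icc 1 (k - 1), (k : ℝ) * ‖p j‖ := by
          refine Finset.sum_le_sum fun j hj => ?_
          rw [Finset.mem_Icc] at hj
          have : (j : ℝ) + 1 ≤ (k : ℝ) := by
            have : j + 1 ≤ k := by omega
            exact_mod_cast this
          exact mul_le_mul_of_nonneg_right this (norm_nonneg _)
      _ = (k : ℝ) * ∑ j ∈ Finset.Icc 1 (k - 1), ‖p j‖ := by
          rw [Finset.mul_sum]
      _ ≤ (k : ℝ) * T :=
          mul_le_mul_of_nonneg_left
            (Finset.sum_le_sum_of_subset_of_nonneg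
              (Finset.Icc_subset_Icc_right (by omega))
              (fun _ _ _ => norm_nonneg _)) (Nat.cast_nonneg _)
  have hre : ∑ j ∈ Finset.Icc 1 (k - 1), ‖p (j + 1)‖
      = ∑ j ∈ Finset.Icc 2 k, ‖p j‖ := by
    rw [show Finset.Icc 2 k = Finset.map ⟨(· + 1), add_left_injective 1⟩
        (Finset.Icc 1 (k - 1)) from ?_, Finset.sum_map]
    · rfl
    · ext j
      simp only [Finset.mem_map, Finset.mem_Icc, Function.Embedding.coeFn_mk]
      constructor
      · intro h; exact ⟨j - 1, by omega, by omega⟩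
      · rintro ⟨a, ha, rfl⟩; omega
  have hsplit : T = ‖p 1‖ + ∑ j ∈ Finset.Icc 2 k, ‖p j‖ := by
    rw [hT, show Finset.Icc 1 k = insert 1 (Finset.Icc 2 k) from ?_,
      Finset.sum_insert (by simp)]
    ext j; simp only [Finset.mem_insert, Finset.mem_Icc]; omega
  have hsum2 : ∑ j ∈ Finset.Icc 1 (k - 1), ‖X‖ * ‖p (j + 1)‖
      = ‖X‖ * (T - ‖p 1‖) := by
    rw [← Finset.mul_sum, hre]
    rw [hsplit]; ring
  have hXnn : (0 : ℝ) ≤ ‖X‖ := norm_nonneg _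
  have hxnn : (0 : ℝ) ≤ ‖x‖ := norm_nonneg _
  have hynn : (0 : ℝ) ≤ ‖y‖ := norm_nonneg _
  have hp1nn : (0 : ℝ) ≤ ‖p 1‖ := norm_nonneg _
  have hknn : (0 : ℝ) ≤ (k : ℝ) := Nat.cast_nonneg _
  have hsum' : ∑ j ∈ Finset.Icc 1 (k - 1),
      (((j : ℝ) + 1) * ‖p j‖ + ‖X‖ * ‖p (j + 1)‖)
      = (∑ j ∈ Finset.Icc 1 (k - 1), ((j : ℝ) + 1) * ‖p j‖)
        + ∑ j ∈ Finset.Icc 1 (k - 1), ‖X‖ * ‖p (j + 1)‖ :=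
    Finset.sum_add_distrib
  have hXp1 : ‖X‖ * ‖p 1‖ ≤ ‖X‖ * ‖p 1‖ := le_refl _
  nlinarith [mul_nonneg hXnn hTnn, mul_nonneg hxnn hTnn,
    mul_nonneg hknn hynn, mul_nonneg hknn hxnn,
    mul_nonneg hxnn hynn, mul_nonneg hXnn hynn, mul_nonneg hXnn hxnn,
    mul_nonneg hknn hTnn]
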